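/- Let I = [a, b] be a closed interval with a < b, let x_1, …, x_n ∈ I, and let p_1, …, p_n > 0 with Σ p_i = 1. If f : [a, b] → ℝ is convex, then Σ_i p_i f(x_i) ≤ f(Σ_i p_i x_i) + f(a) + f(b) - 2 f((a+b)/2). -/

import Mathlib

/-- Reverse Jensen-type inequality: for a convex `f` on `[a,b]`, weights `p` summing to 1
and points `x i ∈ [a,b]`,
`Σ p i · f (x i) ≤ f (Σ p i · x i) + f a + f b - 2 f((a+b)/2)`. -/
theorem reverse_jensen (a b : ℝ) (hab : a < b) (n : ℕ) (x : Fin n → ℝ) (p : Fin n → ℝ)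
    (hx : ∀ i, x i ∈ Set.Icc a b) (hp : ∀ i, 0 < p i) (hp1 : ∑ i, p i = 1)
    (f : ℝ → ℝ) (hf : ConvexOn ℝ (Set.Icc a b) f) :
    ∑ i, p i * f (x i) ≤ f (∑ i, p i * x i) + f a + f b - 2 * f ((a + b) / 2) := by
  have hba : (0:ℝ) < b - a := by linarith
  have haI : a ∈ Set.Icc a b := ⟨le_refl a, hab.le⟩
  have hbI : b ∈ Set.Icc a b := ⟨hab.le, le_refl b⟩
  set X := ∑ i, p i * x i with hXdef
  have hXa : a ≤ X := by
    have h : ∑ i, p i * a ≤ ∑ i, p i * x i :=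
      Finset.sum_le_sum fun i _ => mul_le_mul_of_nonneg_left (hx i).1 (hp i).le
    calc a = ∑ i, p i * a := by rw [← Finset.sum_mul, hp1, one_mul]
      _ ≤ X := h
  have hXb : X ≤ b := by
    have h : ∑ i, p i * x i ≤ ∑ i, p i * b :=
      Finset.sum_le_sum fun i _ => mul_le_mul_of_nonneg_left (hx i).2 (hp i).le
    calc X ≤ ∑ i, p i * b := h
      _ = b := by rw [← Finset.sum_mul, hp1, one_mul]
  have hXI : X ∈ Set.Icc a b := ⟨hXa, hXb⟩
  have chord : ∀ y ∈ Set.Icc a b, (b - a) * f y ≤ (b - y) * f a + (y - a) * f b := by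
    intro y hy
    have hs : (0:ℝ) ≤ (b - y)/(b - a) := div_nonneg (by linarith [hy.2]) hba.le
    have ht : (0:ℝ) ≤ (y - a)/(b - a) := div_nonneg (by linarith [hy.1]) hba.le
    have hst : (b - y)/(b - a) + (y - a)/(b - a) = 1 := by field_simp; ring
    have h := hf.2 haI hbI hs ht hst
    have hy' : ((b - y)/(b - a)) • a + ((y - a)/(b - a)) • b = y := by
      simp only [smul_eq_mul]; field_simp; ring
    rw [hy'] at h
    simp only [smul_eq_mul] at h
    have h2 := mul_le_mul_of_nonneg_left h hba.le
    calc (b - a) * f y ≤ (b - a) * ((b - y)/(b - a) * f a + (y - a)/(b - a) * f b) := h2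
      _ = (b - y) * f a + (y - a) * f b := by field_simp
  have hsum : (b - a) * ∑ i, p i * f (x i) ≤ (b - X) * f a + (X - a) * f b := by
    have h1 : ∀ i ∈ Finset.univ, (b - a) * (p i * f (x i)) ≤
        p i * ((b - x i) * f a + (x i - a) * f b) := by
      intro i _
      have h := mul_le_mul_of_nonneg_left (chord (x i) (hx i)) (hp i).le
      nlinarith [h]
    calc (b - a) * ∑ i, p i * f (x i) = ∑ i, (b - a) * (p i * f (x i)) := Finset.mul_sum _ _ _
      _ ≤ ∑ i, p i * ((b - x i) * f a + (x i - a) * f b) := Finset.sum_le_sum h1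
      _ = ∑ i, (p i * (b * f a - a * f b) + (p i * x i) * (f b - f a)) := by
          apply Finset.sum_congr rfl; intro i _; ring
      _ = (∑ i, p i) * (b * f a - a * f b) + (∑ i, p i * x i) * (f b - f a) := by
          rw [Finset.sum_add_distrib, ← Finset.sum_mul, ← Finset.sum_mul]
      _ = (b - X) * f a + (X - a) * f b := by rw [hp1]; ring
  have hm2 : 2 * f ((a+b)/2) ≤ f a + f b := by
    have h := chord ((a+b)/2) ⟨by linarith, by linarith⟩
    nlinarith [h]
  have key : (b - X) * f a + (X - a) * f b ≤ (b - a) * (f X + f a + f b - 2 * f ((a+b)/2)) := by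
    rcases le_total X ((a+b)/2) with hXm | hXm
    · have hbX : (0:ℝ) < b - X := by linarith
      set s := (b - a) / (2 * (b - X)) with hs
      have hs0 : 0 ≤ s := div_nonneg hba.le (by linarith)
      have hs1 : s ≤ 1 := by
        rw [hs, div_le_one (by linarith)]; linarith
      have hmeq : s • X + (1 - s) • b = (a+b)/2 := by
        simp only [smul_eq_mul, hs]; field_simp; ring
      have hst : s + (1 - s) = 1 := by ring
      have h := hf.2 hXI hbI hs0 (by linarith : (0:ℝ) ≤ 1 - s) hst
      rw [hmeq] at h
      simp only [smul_eq_mul] at h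
      have h2 : 2*(b - X) * f ((a+b)/2) ≤ (b - a) * f X + (2*(b-X) - (b-a)) * f b := by
        have h3 := mul_le_mul_of_nonneg_left h (by linarith : (0:ℝ) ≤ 2*(b-X))
        calc 2*(b-X) * f ((a+b)/2) ≤ 2*(b-X) * (s * f X + (1-s) * f b) := h3
          _ = (b - a) * f X + (2*(b-X) - (b-a)) * f b := by rw [hs]; field_simp
      have h4 := mul_le_mul_of_nonneg_left hm2 (by linarith : (0:ℝ) ≤ X - a)
      nlinarith [h2, h4]
    · have haX : (0:ℝ) < X - a := by linarith
      set s := (b - a) / (2 * (X - a)) with hs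
      have hs0 : 0 ≤ s := div_nonneg hba.le (by linarith)
      have hs1 : s ≤ 1 := by
        rw [hs, div_le_one (by linarith)]; linarith
      have hmeq : s • X + (1 - s) • a = (a+b)/2 := by
        simp only [smul_eq_mul, hs]; field_simp; ring
      have hst : s + (1 - s) = 1 := by ring
      have h := hf.2 hXI haI hs0 (by linarith : (0:ℝ) ≤ 1 - s) hst
      rw [hmeq] at h
      simp only [smul_eq_mul] at h
      have h2 : 2*(X - a) * f ((a+b)/2) ≤ (b - a) * f X + (2*(X-a) - (b-a)) * f a := by
        have h3 := mul_le_mul_of_nonneg_left h (by linarith : (0:ℝ) ≤ 2*(X-a))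
        calc 2*(X-a) * f ((a+b)/2) ≤ 2*(X-a) * (s * f X + (1-s) * f a) := h3
          _ = (b - a) * f X + (2*(X-a) - (b-a)) * f a := by rw [hs]; field_simp
      have h4 := mul_le_mul_of_nonneg_left hm2 (by linarith : (0:ℝ) ≤ b - X)
      nlinarith [h2, h4]
  nlinarith [hsum, key]
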